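/- Two cells of a triangular partition τ are both removable if and only if they are consecutive vertices of the convex hull of τ and the line through them does not intersect the convex hull of ℕ² \ τ. -/

import Mathlib

open Set

/-- The positive quadrant of lattice points, representing ℕ² in the paper. -/
def posQuad : Set (ℕ × ℕ) := {c | 1 ≤ c.1 ∧ 1 ≤ c.2}

/-- Embedding of lattice cells into the real plane. -/
noncomputable def toR2 (c : ℕ × ℕ) : ℝ × ℝ := ((c.1 : ℝ), (c.2 : ℝ))

/-- A set of cells is triangular if it consists exactly of the points of ℕ²
lying weakly below some line x/r + y/s = 1 with r, s > 0. -/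
def IsTriangularSet (S : Set (ℕ × ℕ)) : Prop :=
  ∃ r s : ℝ, 0 < r ∧ 0 < s ∧
    S = {c : ℕ × ℕ | 1 ≤ c.1 ∧ 1 ≤ c.2 ∧ (c.1 : ℝ) / r + (c.2 : ℝ) / s ≤ 1}

/-- `S` is the Ferrers diagram of an integer partition. -/
def IsPartitionSet (S : Set (ℕ × ℕ)) : Prop :=
  S.Finite ∧ S ⊆ posQuad ∧
    ∀ c ∈ S, ∀ a b : ℕ, 1 ≤ a → a ≤ c.1 → 1 ≤ b → b ≤ c.2 → (a, b) ∈ S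

/-- A cell is removable if deleting it yields a triangular partition. -/
def RemovableCell (S : Set (ℕ × ℕ)) (c : ℕ × ℕ) : Prop :=
  c ∈ S ∧ IsTriangularSet (S \ {c})

/-- A cell of the complement is addable if adjoining it yields a triangular partition. -/
def AddableCell (S : Set (ℕ × ℕ)) (c : ℕ × ℕ) : Prop :=
  c ∈ posQuad \ S ∧ IsTriangularSet (insert c S)

/-- Two points are consecutive vertices of a convex set if they are distinct
extreme points and the segment between them is a face (an edge) of the set. -/
def ConsecutiveVertices (A : Set (ℝ × ℝ)) (p q : ℝ × ℝ) : Prop :=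
  p ≠ q ∧ p ∈ Set.extremePoints ℝ A ∧ q ∈ Set.extremePoints ℝ A ∧
    IsExtreme ℝ A (segment ℝ p q)

/-! ### Auxiliary definitions and lemmas -/

/-- The set of lattice cells cut out by the line `u*x + v*y = 1`. -/
def Cut (u v : ℝ) : Set (ℕ × ℕ) := {c | 1 ≤ c.1 ∧ 1 ≤ c.2 ∧ u * c.1 + v * c.2 ≤ 1}

lemma mem_cut {u v : ℝ} {c : ℕ × ℕ} :
    c ∈ Cut u v ↔ 1 ≤ c.1 ∧ 1 ≤ c.2 ∧ u * c.1 + v * c.2 ≤ 1 := Iff.rfl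

lemma tri_iff_cut {S : Set (ℕ × ℕ)} :
    IsTriangularSet S ↔ ∃ u v : ℝ, 0 < u ∧ 0 < v ∧ S = Cut u v := by
  constructor
  · rintro ⟨r, s, hr, hs, rfl⟩
    refine ⟨r⁻¹, s⁻¹, by positivity, by positivity, ?_⟩
    ext c
    simp only [mem_setOf_eq, mem_cut]
    rw [div_eq_mul_inv, div_eq_mul_inv]
    constructor
    · rintro ⟨a, b, c⟩; exact ⟨a, b, by linarith [c]⟩
    · rintro ⟨a, b, c⟩; exact ⟨a, b, by linarith [c]⟩
  · rintro ⟨u, v, hu, hv, rfl⟩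
    refine ⟨u⁻¹, v⁻¹, by positivity, by positivity, ?_⟩
    ext c
    simp only [mem_setOf_eq, mem_cut]
    rw [div_eq_mul_inv, div_eq_mul_inv, inv_inv, inv_inv]
    constructor
    · rintro ⟨a, b, c⟩; exact ⟨a, b, by linarith [c]⟩
    · rintro ⟨a, b, c⟩; exact ⟨a, b, by linarith [c]⟩

lemma toR2_inj : Function.Injective toR2 := by
  rintro ⟨a, b⟩ ⟨c, d⟩ h
  simp only [toR2, Prod.mk.injEq, Nat.cast_inj] at h
  exact Prod.ext h.1 h.2

/-- Facts extracted from removability of a cell. -/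
lemma removable_facts {S : Set (ℕ × ℕ)} {p : ℕ × ℕ} (hp1 : 1 ≤ p.1) (hp2 : 1 ≤ p.2)
    (hrem : RemovableCell S p) :
    ∃ w z : ℝ, 0 < w ∧ 0 < z ∧ 1 < w * p.1 + z * p.2 ∧
      (∀ q ∈ S, q ≠ p → w * q.1 + z * q.2 ≤ 1) ∧
      (∀ q : ℕ × ℕ, 1 ≤ q.1 → 1 ≤ q.2 → q ∉ S → 1 < w * q.1 + z * q.2) := by
  obtain ⟨hpS, htri⟩ := hrem
  obtain ⟨w, z, hw, hz, hEq⟩ := tri_iff_cut.mp htri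
  refine ⟨w, z, hw, hz, ?_, ?_, ?_⟩
  · have : p ∉ S \ {p} := by simp
    rw [hEq, mem_cut] at this
    push_neg at this
    exact this hp1 hp2
  · intro q hq hqp
    have : q ∈ S \ {p} := ⟨hq, by simpa using hqp⟩
    rw [hEq, mem_cut] at this
    exact this.2.2
  · intro q hq1 hq2 hqS
    have : q ∉ S \ {p} := fun h => hqS h.1
    rw [hEq, mem_cut] at this
    push_neg at this
    exact this hq1 hq2

/-- A triangular (cut) set is finite. -/
lemma cut_finite {u v : ℝ} (hu : 0 < u) (hv : 0 < v) : (Cut u v).Finite := by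
  have hsub : Cut u v ⊆ Set.Icc (1,1) (⌈u⁻¹⌉₊, ⌈v⁻¹⌉₊) := by
    rintro ⟨x, y⟩ ⟨hx, hy, hxy⟩
    have hx' : (x : ℝ) * u ≤ 1 := by nlinarith [mul_pos hv (show (0:ℝ) < y by exact_mod_cast hy)]
    have hy' : (y : ℝ) * v ≤ 1 := by nlinarith [mul_pos hu (show (0:ℝ) < x by exact_mod_cast hx)]
    have hxle : (x : ℝ) ≤ u⁻¹ := by have h := (le_div_iff₀ hu).mpr hx'; rwa [one_div] at h
    have hyle : (y : ℝ) ≤ v⁻¹ := by have h := (le_div_iff₀ hv).mpr hy'; rwa [one_div] at h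
    constructor
    · exact ⟨hx, hy⟩
    · constructor
      · exact_mod_cast hxle.trans (Nat.le_ceil _)
      · exact_mod_cast hyle.trans (Nat.le_ceil _)
  exact (Set.finite_Icc _ _).subset hsub

/-- Members of a convex hull attaining the max of a linear functional lie in any convex set
containing the maximizers among the generators. -/
lemma face_lemma {V F : Set (ℝ × ℝ)} {L : (ℝ × ℝ) → ℝ} (hlin : IsLinearMap ℝ L) {m : ℝ}
    (hF : Convex ℝ F) (hV : ∀ p ∈ V, L p ≤ m) (hVF : ∀ p ∈ V, L p = m → p ∈ F)
    {u : ℝ × ℝ} (hu : u ∈ convexHull ℝ V) (hLu : m ≤ L u) : u ∈ F := by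
  classical
  rw [convexHull_eq] at hu
  obtain ⟨ι, t, w, z, hw0, hw1, hzV, hcm⟩ := hu
  have hLcm : L u = ∑ i ∈ t, w i * L (z i) := by
    rw [← hcm, Finset.centerMass, hw1, inv_one, one_smul]
    rw [show L (∑ i ∈ t, w i • z i) = (IsLinearMap.mk' L hlin) (∑ i ∈ t, w i • z i) from rfl,
      map_sum]
    simp [smul_eq_mul]
  have hterm : ∀ i ∈ t, 0 ≤ w i * (m - L (z i)) := fun i hi =>
    mul_nonneg (hw0 i hi) (by linarith [hV (z i) (hzV i hi)])
  have hsumid : ∑ i ∈ t, w i * (m - L (z i)) = m * (∑ i ∈ t, w i) - ∑ i ∈ t, w i * L (z i) := by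
    rw [Finset.mul_sum, ← Finset.sum_sub_distrib]
    exact Finset.sum_congr rfl (fun i _ => by ring)
  have hsum0 : ∑ i ∈ t, w i * (m - L (z i)) = 0 := by
    have h1 : ∑ i ∈ t, w i * (m - L (z i)) ≤ 0 := by
      rw [hsumid, hw1]; linarith
    exact le_antisymm h1 (Finset.sum_nonneg hterm)
  have hzero := (Finset.sum_eq_zero_iff_of_nonneg hterm).mp hsum0
  have hzF : ∀ i ∈ t.filter (fun i => w i ≠ 0), z i ∈ F := by
    intro i hi
    rw [Finset.mem_filter] at hi
    have h0 := hzero i hi.1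
    have : L (z i) = m := by
      rcases mul_eq_zero.mp h0 with h | h
      · exact absurd h hi.2
      · linarith
    exact hVF _ (hzV i hi.1) this
  have hcm' : (t.filter (fun i => w i ≠ 0)).centerMass w z = u := by
    rw [Finset.centerMass_filter_ne_zero, hcm]
  have : u ∈ convexHull ℝ F := by
    rw [← hcm']
    refine Finset.centerMass_mem_convexHull _ (fun i hi => hw0 i (Finset.mem_filter.mp hi).1) ?_ hzF
    rw [Finset.sum_filter_ne_zero, hw1]; exact one_pos
  rwa [hF.convexHull_eq] at this

set_option maxHeartbeats 2000000 in
lemma claims_main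
    {S : Set (ℕ × ℕ)} {α β : ℝ} (hα : 0 < α) (hβ : 0 < β) (hSeq : S = Cut α β)
    {c1 c2 : ℕ × ℕ} (hx : c2.1 < c1.1) (hy : c1.2 < c2.2)
    (h1S : c1 ∈ S) (h2S : c2 ∈ S)
    {u1 v1 : ℝ} (hu1 : 0 < u1) (hv1 : 0 < v1)
    (hc1 : 1 < u1 * c1.1 + v1 * c1.2)
    (hf1 : ∀ q ∈ S, q ≠ c1 → u1 * q.1 + v1 * q.2 ≤ 1)
    (hg1 : ∀ q : ℕ × ℕ, 1 ≤ q.1 → 1 ≤ q.2 → q ∉ S → 1 < u1 * q.1 + v1 * q.2)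
    {u2 v2 : ℝ} (hu2 : 0 < u2) (hv2 : 0 < v2)
    (hc2 : 1 < u2 * c2.1 + v2 * c2.2)
    (hf2 : ∀ q ∈ S, q ≠ c2 → u2 * q.1 + v2 * q.2 ≤ 1)
    (hg2 : ∀ q : ℕ × ℕ, 1 ≤ q.1 → 1 ≤ q.2 → q ∉ S → 1 < u2 * q.1 + v2 * q.2)
    {a b : ℝ} (ha : 0 < a) (hb : 0 < b)
    (hl1 : a * c1.1 + b * c1.2 = 1) (hl2 : a * c2.1 + b * c2.2 = 1) :
    (∀ q : ℕ × ℕ, 1 ≤ q.1 → 1 ≤ q.2 → q ∉ S → 1 < a * q.1 + b * q.2) ∧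
    (∀ z ∈ S, a * z.1 + b * z.2 ≤ 1) ∧
    (∀ z ∈ S, a * z.1 + b * z.2 = 1 →
       ∃ θ : ℝ, 0 ≤ θ ∧ θ ≤ 1 ∧ (z.1 : ℝ) = θ * c1.1 + (1 - θ) * c2.1 ∧
         (z.2 : ℝ) = θ * c1.2 + (1 - θ) * c2.2) := by
  have hcoord : ∀ z ∈ S, 1 ≤ z.1 ∧ 1 ≤ z.2 := by
    intro z hz; rw [hSeq] at hz; exact ⟨hz.1, hz.2.1⟩
  have hfS : ∀ z ∈ S, α * z.1 + β * z.2 ≤ 1 := by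
    intro z hz; rw [hSeq] at hz; exact hz.2.2
  have hfC : ∀ q : ℕ × ℕ, 1 ≤ q.1 → 1 ≤ q.2 → q ∉ S → 1 < α * q.1 + β * q.2 := by
    intro q h1 h2 hq; rw [hSeq, mem_cut] at hq; push_neg at hq; exact hq h1 h2
  have hne21 : c2 ≠ c1 := fun h => absurd (congrArg Prod.fst h) (Nat.ne_of_lt hx)
  have hne12 : c1 ≠ c2 := fun h => hne21 h.symm
  have hX : (c2.1 : ℝ) < c1.1 := by exact_mod_cast hx
  have hY : (c1.2 : ℝ) < c2.2 := by exact_mod_cast hy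
  have hf1c2 : u1 * c2.1 + v1 * c2.2 ≤ 1 := hf1 c2 h2S hne21
  have hf2c1 : u2 * c1.1 + v2 * c1.2 ≤ 1 := hf2 c1 h1S hne12
  have h11 := hcoord c1 h1S
  have h22 := hcoord c2 h2S
  have hX2pos : (0:ℝ) < c2.1 := by exact_mod_cast h22.1
  have hY1pos : (0:ℝ) < c1.2 := by exact_mod_cast h11.2
  have hden : (0:ℝ) < (c1.1 : ℝ) - c2.1 := by linarith
  -- Claim I
  have claimI : ∀ q : ℕ × ℕ, 1 ≤ q.1 → 1 ≤ q.2 → q ∉ S → 1 < a * q.1 + b * q.2 := by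
    intro q hq1 hq2 hqS
    by_contra hcon
    push_neg at hcon
    obtain ⟨μ, hmul⟩ : ∃ μ : ℝ, μ * ((c1.1 : ℝ) - c2.1) = (q.1 : ℝ) - c2.1 :=
      ⟨_, div_mul_cancel₀ _ (ne_of_gt hden)⟩
    have hxq : (q.1 : ℝ) = μ * c1.1 + (1 - μ) * c2.1 := by linear_combination -hmul
    have hlY : a * q.1 + b * (μ * c1.2 + (1 - μ) * c2.2) = 1 := by
      linear_combination μ * hl1 + (1 - μ) * hl2 + a * hxq
    have hYq : (q.2 : ℝ) ≤ μ * c1.2 + (1 - μ) * c2.2 := by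
      have hb2 : b * q.2 ≤ b * (μ * c1.2 + (1 - μ) * c2.2) := by linarith
      exact le_of_mul_le_mul_left hb2 hb
    rcases lt_or_ge μ 0 with hμ0 | hμ0
    · -- use f1
      have hid : u1 * q.1 + v1 * (μ * c1.2 + (1 - μ) * c2.2)
          = μ * (u1 * c1.1 + v1 * c1.2) + (1 - μ) * (u1 * c2.1 + v1 * c2.2) := by
        linear_combination u1 * hxq
      have hle : u1 * q.1 + v1 * q.2 ≤ u1 * q.1 + v1 * (μ * c1.2 + (1 - μ) * c2.2) :=
        by linarith [mul_nonneg hv1.le (sub_nonneg.mpr hYq)]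
      have := hg1 q hq1 hq2 hqS
      linarith [mul_pos (neg_pos.mpr hμ0)
        (show 0 < (u1 * c1.1 + v1 * c1.2) - (u1 * c2.1 + v1 * c2.2) by linarith)]
    rcases le_or_gt μ 1 with hμ1 | hμ1
    · -- use f (α, β)
      have hid : α * q.1 + β * (μ * c1.2 + (1 - μ) * c2.2)
          = μ * (α * c1.1 + β * c1.2) + (1 - μ) * (α * c2.1 + β * c2.2) := by
        linear_combination α * hxq
      have := hfC q hq1 hq2 hqS
      linarith [mul_nonneg hβ.le (sub_nonneg.mpr hYq),
        mul_le_mul_of_nonneg_left (hfS c1 h1S) hμ0,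
        mul_le_mul_of_nonneg_left (hfS c2 h2S) (by linarith : (0:ℝ) ≤ 1 - μ)]
    · -- use f2
      have hid : u2 * q.1 + v2 * (μ * c1.2 + (1 - μ) * c2.2)
          = μ * (u2 * c1.1 + v2 * c1.2) + (1 - μ) * (u2 * c2.1 + v2 * c2.2) := by
        linear_combination u2 * hxq
      have := hg2 q hq1 hq2 hqS
      linarith [mul_nonneg hv2.le (sub_nonneg.mpr hYq),
        mul_pos (show (0:ℝ) < μ - 1 by linarith)
          (show 0 < (u2 * c2.1 + v2 * c2.2) - (u2 * c1.1 + v2 * c1.2) by linarith)]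
  refine ⟨claimI, ?_, ?_⟩
  · -- Claim II
    by_contra hcon
    push_neg at hcon
    obtain ⟨z0, hz0S, hz0⟩ := hcon
    have hSfin : S.Finite := hSeq ▸ cut_finite hα hβ
    have hBfin : {z ∈ S | 1 < a * z.1 + b * z.2}.Finite := hSfin.subset (fun z hz => hz.1)
    obtain ⟨d, hdB, hdmax⟩ := Set.exists_max_image _ (fun z : ℕ × ℕ => a * z.1 + b * z.2)
      hBfin ⟨z0, hz0S, hz0⟩
    obtain ⟨hdS, hd1⟩ := hdB
    have hmax : ∀ z ∈ S, a * z.1 + b * z.2 ≤ a * d.1 + b * d.2 := by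
      intro z hz
      rcases lt_or_ge 1 (a * z.1 + b * z.2) with h | h
      · exact hdmax z ⟨hz, h⟩
      · linarith
    have hdc1 : d ≠ c1 := by rintro rfl; rw [hl1] at hd1; exact lt_irrefl _ hd1
    have hdc2 : d ≠ c2 := by rintro rfl; rw [hl2] at hd1; exact lt_irrefl _ hd1
    have hf1d : u1 * d.1 + v1 * d.2 ≤ 1 := hf1 d hdS hdc1
    have hf2d : u2 * d.1 + v2 * d.2 ≤ 1 := hf2 d hdS hdc2
    have hdd := hcoord d hdS
    rcases lt_or_ge d.2 c1.2 with hcase | hcase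
    · -- case (a): forced c1.1 < d.1, chord [c2,d] at column c1.1, contradiction with f1
      have hYd : (d.2 : ℝ) < c1.2 := by exact_mod_cast hcase
      have hdx : (c1.1 : ℝ) < d.1 := by
        by_contra hle
        push_neg at hle
        linarith [mul_le_mul_of_nonneg_left hle ha.le, mul_lt_mul_of_pos_left hYd hb]
      have hdend : (0:ℝ) < (d.1 : ℝ) - c2.1 := by linarith
      obtain ⟨μ, hmul⟩ : ∃ μ : ℝ, μ * ((d.1 : ℝ) - c2.1) = (c1.1 : ℝ) - c2.1 :=
        ⟨_, div_mul_cancel₀ _ (ne_of_gt hdend)⟩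
      have hμ0 : 0 < μ := by
        rcases lt_or_ge 0 μ with h | h
        · exact h
        · exfalso
          have h2 : μ * ((d.1 : ℝ) - c2.1) ≤ 0 * ((d.1 : ℝ) - c2.1) :=
            mul_le_mul_of_nonneg_right h hdend.le
          rw [zero_mul] at h2
          linarith
      have hμ1 : μ < 1 :=
        lt_of_mul_lt_mul_right (by rw [one_mul]; linarith) hdend.le
      have hid : a * c1.1 + b * ((1 - μ) * c2.2 + μ * d.2)
          = (1 - μ) * (a * c2.1 + b * c2.2) + μ * (a * d.1 + b * d.2) := by
        linear_combination -a * hmul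
      rw [hl2] at hid
      have hYgt : (c1.2 : ℝ) < (1 - μ) * c2.2 + μ * d.2 := by
        have h1 : 1 < a * c1.1 + b * ((1 - μ) * c2.2 + μ * d.2) := by
          linarith [mul_pos hμ0 (show (0:ℝ) < a * d.1 + b * d.2 - 1 by linarith)]
        have h2 : b * c1.2 < b * ((1 - μ) * c2.2 + μ * d.2) := by linarith
        exact (mul_lt_mul_iff_right₀ hb).mp h2
      have hid1 : u1 * c1.1 + v1 * ((1 - μ) * c2.2 + μ * d.2)
          = (1 - μ) * (u1 * c2.1 + v1 * c2.2) + μ * (u1 * d.1 + v1 * d.2) := by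
        linear_combination -u1 * hmul
      linarith [mul_pos hv1 (sub_pos.mpr hYgt),
        mul_le_mul_of_nonneg_left hf1c2 (by linarith : (0:ℝ) ≤ 1 - μ),
        mul_le_mul_of_nonneg_left hf1d hμ0.le]
    rcases lt_or_ge d.1 c2.1 with hcase2 | hcase2
    · -- case (b): forced c2.2 < d.2, chord [d,c1] at column c2.1, contradiction with f2
      have hXd : (d.1 : ℝ) < c2.1 := by exact_mod_cast hcase2
      have hdend : (0:ℝ) < (c1.1 : ℝ) - d.1 := by linarith
      obtain ⟨μ, hmul⟩ : ∃ μ : ℝ, μ * ((c1.1 : ℝ) - d.1) = (c2.1 : ℝ) - d.1 :=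
        ⟨_, div_mul_cancel₀ _ (ne_of_gt hdend)⟩
      have hμ0 : 0 < μ := by
        rcases lt_or_ge 0 μ with h | h
        · exact h
        · exfalso
          have h2 : μ * ((c1.1 : ℝ) - d.1) ≤ 0 * ((c1.1 : ℝ) - d.1) :=
            mul_le_mul_of_nonneg_right h hdend.le
          rw [zero_mul] at h2
          linarith
      have hμ1 : μ < 1 :=
        lt_of_mul_lt_mul_right (by rw [one_mul]; linarith) hdend.le
      have hid : a * c2.1 + b * ((1 - μ) * d.2 + μ * c1.2)
          = (1 - μ) * (a * d.1 + b * d.2) + μ * (a * c1.1 + b * c1.2) := by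
        linear_combination -a * hmul
      rw [hl1] at hid
      have hYgt : (c2.2 : ℝ) < (1 - μ) * d.2 + μ * c1.2 := by
        have h1 : 1 < a * c2.1 + b * ((1 - μ) * d.2 + μ * c1.2) := by
          linarith [mul_pos (show (0:ℝ) < 1 - μ by linarith)
            (show (0:ℝ) < a * d.1 + b * d.2 - 1 by linarith)]
        have h2 : b * c2.2 < b * ((1 - μ) * d.2 + μ * c1.2) := by linarith
        exact (mul_lt_mul_iff_right₀ hb).mp h2
      have hid2 : u2 * c2.1 + v2 * ((1 - μ) * d.2 + μ * c1.2)
          = (1 - μ) * (u2 * d.1 + v2 * d.2) + μ * (u2 * c1.1 + v2 * c1.2) := by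
        linear_combination -u2 * hmul
      linarith [mul_pos hv2 (sub_pos.mpr hYgt),
        mul_le_mul_of_nonneg_left hf2c1 hμ0.le,
        mul_le_mul_of_nonneg_left hf2d (by linarith : (0:ℝ) ≤ 1 - μ)]
    · -- main case : c1.2 ≤ d.2 and c2.1 ≤ d.1
      have hYd : (c1.2 : ℝ) ≤ d.2 := by exact_mod_cast hcase
      have hXd : (c2.1 : ℝ) ≤ d.1 := by exact_mod_cast hcase2
      rcases lt_or_ge c1.1 (2 * d.1) with hbig | hsmall
      · -- reflection e = 2d - c1 is a cell of the complement
        obtain ⟨e, hcast1, hcast2, hee1, hee2⟩ :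
            ∃ e : ℕ × ℕ, (e.1 : ℝ) = 2 * d.1 - c1.1 ∧ (e.2 : ℝ) = 2 * d.2 - c1.2 ∧
              1 ≤ e.1 ∧ 1 ≤ e.2 := by
          have hb1 : c1.1 ≤ 2 * d.1 := by omega
          have hb2 : c1.2 ≤ 2 * d.2 := by omega
          refine ⟨(2 * d.1 - c1.1, 2 * d.2 - c1.2), ?_, ?_, by omega, ?_⟩
          · rw [Nat.cast_sub hb1]; push_cast; ring
          · rw [Nat.cast_sub hb2]; push_cast; ring
          · have := h11.2; omega
        have heS : e ∉ S := by
          intro heS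
          have := hmax e heS
          rw [hcast1, hcast2] at this
          linarith
        have := hg1 e hee1 hee2 heS
        rw [hcast1, hcast2] at this
        linarith
      rcases lt_or_ge c2.2 (2 * d.2) with hbig2 | hsmall2
      · -- reflection e = 2d - c2
        obtain ⟨e, hcast1, hcast2, hee1, hee2⟩ :
            ∃ e : ℕ × ℕ, (e.1 : ℝ) = 2 * d.1 - c2.1 ∧ (e.2 : ℝ) = 2 * d.2 - c2.2 ∧
              1 ≤ e.1 ∧ 1 ≤ e.2 := by
          have hb1 : c2.1 ≤ 2 * d.1 := by omega
          have hb2 : c2.2 ≤ 2 * d.2 := by omega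
          refine ⟨(2 * d.1 - c2.1, 2 * d.2 - c2.2), ?_, ?_, ?_, by omega⟩
          · rw [Nat.cast_sub hb1]; push_cast; ring
          · rw [Nat.cast_sub hb2]; push_cast; ring
          · have := h22.1; omega
        have heS : e ∉ S := by
          intro heS
          have := hmax e heS
          rw [hcast1, hcast2] at this
          linarith
        have := hg2 e hee1 hee2 heS
        rw [hcast1, hcast2] at this
        linarith
      · -- algebraic contradiction
        have hs1 : 2 * (d.1 : ℝ) ≤ c1.1 := by exact_mod_cast hsmall
        have hs2 : 2 * (d.2 : ℝ) ≤ c2.2 := by exact_mod_cast hsmall2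
        have k1 : b * d.2 - b * c1.2 > a * d.1 := by
          linarith [mul_le_mul_of_nonneg_left hs1 ha.le]
        have k2 : a * d.1 - a * c2.1 > b * d.2 := by
          linarith [mul_le_mul_of_nonneg_left hs2 hb.le]
        linarith [mul_pos ha hX2pos, mul_pos hb hY1pos]
  · -- Claim III
    intro z hz hlz
    obtain ⟨μ, hmul⟩ : ∃ μ : ℝ, μ * ((c1.1 : ℝ) - c2.1) = (z.1 : ℝ) - c2.1 :=
      ⟨_, div_mul_cancel₀ _ (ne_of_gt hden)⟩
    have hxz : (z.1 : ℝ) = μ * c1.1 + (1 - μ) * c2.1 := by linear_combination -hmul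
    have hyz : (z.2 : ℝ) = μ * c1.2 + (1 - μ) * c2.2 := by
      have hlY : a * z.1 + b * (μ * c1.2 + (1 - μ) * c2.2) = 1 := by
        linear_combination μ * hl1 + (1 - μ) * hl2 + a * hxz
      have hb2 : b * z.2 = b * (μ * c1.2 + (1 - μ) * c2.2) := by linarith
      exact mul_left_cancel₀ (ne_of_gt hb) hb2
    rcases lt_or_ge μ 0 with hμ0 | hμ0
    · -- impossible: f2 contradiction
      exfalso
      have hzc2 : z ≠ c2 := by
        intro h
        rw [h] at hxz
        nlinarith [hxz, hden]
      have hf2z : u2 * z.1 + v2 * z.2 ≤ 1 := hf2 z hz hzc2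
      have hid : u2 * z.1 + v2 * z.2
          = μ * (u2 * c1.1 + v2 * c1.2) + (1 - μ) * (u2 * c2.1 + v2 * c2.2) := by
        linear_combination u2 * hxz + v2 * hyz
      linarith [mul_pos (neg_pos.mpr hμ0)
        (show 0 < (u2 * c2.1 + v2 * c2.2) - (u2 * c1.1 + v2 * c1.2) by linarith)]
    rcases le_or_gt μ 1 with hμ1 | hμ1
    · exact ⟨μ, hμ0, hμ1, hxz, hyz⟩
    · -- impossible: f1 contradiction
      exfalso
      have hzc1 : z ≠ c1 := by
        intro h
        rw [h] at hxz
        nlinarith [hxz, hden]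
      have hf1z : u1 * z.1 + v1 * z.2 ≤ 1 := hf1 z hz hzc1
      have hid : u1 * z.1 + v1 * z.2
          = μ * (u1 * c1.1 + v1 * c1.2) + (1 - μ) * (u1 * c2.1 + v1 * c2.2) := by
        linear_combination u1 * hxz + v1 * hyz
      linarith [mul_pos (show (0:ℝ) < μ - 1 by linarith)
        (show 0 < (u1 * c1.1 + v1 * c1.2) - (u1 * c2.1 + v1 * c2.2) by linarith)]

lemma linfun_isLinear (a b : ℝ) : IsLinearMap ℝ (fun w : ℝ × ℝ => a * w.1 + b * w.2) := by
  constructor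
  · intro p q; simp only [Prod.fst_add, Prod.snd_add]; ring
  · intro c p; simp only [Prod.smul_fst, Prod.smul_snd, smul_eq_mul]; ring

lemma toR2_fst (c : ℕ × ℕ) : (toR2 c).1 = (c.1 : ℝ) := rfl
lemma toR2_snd (c : ℕ × ℕ) : (toR2 c).2 = (c.2 : ℝ) := rfl

/-- Given the three claims about the line through c1 and c2, establish the RHS. -/
lemma rhs_of_claims
    {S : Set (ℕ × ℕ)} {c1 c2 : ℕ × ℕ} (h1S : c1 ∈ S) (h2S : c2 ∈ S) (hne : c1 ≠ c2)
    {a b : ℝ} (ha : 0 < a) (hb : 0 < b)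
    (hl1 : a * c1.1 + b * c1.2 = 1) (hl2 : a * c2.1 + b * c2.2 = 1)
    {u1 v1 : ℝ} (hc1 : 1 < u1 * c1.1 + v1 * c1.2)
    (hf1 : ∀ q ∈ S, q ≠ c1 → u1 * q.1 + v1 * q.2 ≤ 1)
    {u2 v2 : ℝ} (hc2 : 1 < u2 * c2.1 + v2 * c2.2)
    (hf2 : ∀ q ∈ S, q ≠ c2 → u2 * q.1 + v2 * q.2 ≤ 1)
    (cI : ∀ q : ℕ × ℕ, 1 ≤ q.1 → 1 ≤ q.2 → q ∉ S → 1 < a * q.1 + b * q.2)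
    (cII : ∀ z ∈ S, a * z.1 + b * z.2 ≤ 1)
    (cIII : ∀ z ∈ S, a * z.1 + b * z.2 = 1 →
       ∃ θ : ℝ, 0 ≤ θ ∧ θ ≤ 1 ∧ (z.1 : ℝ) = θ * c1.1 + (1 - θ) * c2.1 ∧
         (z.2 : ℝ) = θ * c1.2 + (1 - θ) * c2.2) :
    ConsecutiveVertices (convexHull ℝ (toR2 '' S)) (toR2 c1) (toR2 c2) ∧
      (affineSpan ℝ {toR2 c1, toR2 c2} : Set (ℝ × ℝ)) ∩
        convexHull ℝ (toR2 '' (posQuad \ S)) = ∅ := by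
  set p1 := toR2 c1 with hp1def
  set p2 := toR2 c2 with hp2def
  have hp1K : p1 ∈ convexHull ℝ (toR2 '' S) := subset_convexHull ℝ _ ⟨c1, h1S, rfl⟩
  have hp2K : p2 ∈ convexHull ℝ (toR2 '' S) := subset_convexHull ℝ _ ⟨c2, h2S, rfl⟩
  have hlinh := linfun_isLinear a b
  have hLp1 : a * p1.1 + b * p1.2 = 1 := hl1
  have hLp2 : a * p2.1 + b * p2.2 = 1 := hl2
  have himg : ∀ p ∈ toR2 '' S, a * p.1 + b * p.2 ≤ 1 := by
    rintro p ⟨z, hz, rfl⟩; exact cII z hz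
  have hKle : ∀ w ∈ convexHull ℝ (toR2 '' S), a * w.1 + b * w.2 ≤ 1 := by
    intro w hw
    exact convexHull_min himg (convex_halfSpace_le hlinh 1) hw
  have hsegval : ∀ w ∈ segment ℝ p1 p2, a * w.1 + b * w.2 = 1 := by
    rintro w ⟨s, t, hs, ht, hst, rfl⟩
    simp only [Prod.fst_add, Prod.snd_add, Prod.smul_fst, Prod.smul_snd, smul_eq_mul]
    linear_combination s * hLp1 + t * hLp2 + hst
  have hsegmem : ∀ p ∈ toR2 '' S, a * p.1 + b * p.2 = 1 → p ∈ segment ℝ p1 p2 := by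
    rintro p ⟨z, hz, rfl⟩ hp
    obtain ⟨θ, h0, h1, hxe, hye⟩ := cIII z hz hp
    refine ⟨θ, 1 - θ, h0, by linarith, by ring, ?_⟩
    apply Prod.ext
    · simp only [Prod.fst_add, Prod.smul_fst, smul_eq_mul, hp1def, hp2def, toR2_fst]
      exact hxe.symm
    · simp only [Prod.snd_add, Prod.smul_snd, smul_eq_mul, hp1def, hp2def, toR2_snd]
      exact hye.symm
  have hp1p2 : p1 ≠ p2 := by
    intro h
    apply hne
    have h1 : (c1.1 : ℝ) = c2.1 := congrArg Prod.fst h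
    have h2 : (c1.2 : ℝ) = c2.2 := congrArg Prod.snd h
    exact Prod.ext (by exact_mod_cast h1) (by exact_mod_cast h2)
  -- the edge is a face
  have hface : IsExtreme ℝ (convexHull ℝ (toR2 '' S)) (segment ℝ p1 p2) := by
    constructor
    · exact (convex_convexHull ℝ _).segment_subset hp1K hp2K
    · rintro w1 hw1 w2 hw2 x hxseg ⟨s, t, hs, ht, hst, hx⟩
      have hLx : a * x.1 + b * x.2 = 1 := hsegval x hxseg
      have hcomb : s * (a * w1.1 + b * w1.2) + t * (a * w2.1 + b * w2.2) = 1 := by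
        rw [← hx] at hLx
        simp only [Prod.fst_add, Prod.snd_add, Prod.smul_fst, Prod.smul_snd,
          smul_eq_mul] at hLx
        linear_combination hLx
      have hle1 : a * w1.1 + b * w1.2 ≤ 1 := hKle _ hw1
      have hle2 : a * w2.1 + b * w2.2 ≤ 1 := hKle _ hw2
      have hLw1 : a * w1.1 + b * w1.2 = 1 := by
        by_contra hcon
        have hlt : a * w1.1 + b * w1.2 < 1 := lt_of_le_of_ne hle1 hcon
        nlinarith [mul_lt_mul_of_pos_left hlt hs, mul_le_mul_of_nonneg_left hle2 ht.le]
      have hLw2 : a * w2.1 + b * w2.2 = 1 := by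
        by_contra hcon
        have hlt : a * w2.1 + b * w2.2 < 1 := lt_of_le_of_ne hle2 hcon
        nlinarith [mul_lt_mul_of_pos_left hlt ht, mul_le_mul_of_nonneg_left hle1 hs.le]
      exact face_lemma hlinh (convex_segment _ _) himg hsegmem hw1 hLw1.ge
  -- extreme points
  have hexpt : ∀ (p : ℕ × ℕ), p ∈ S → ∀ u v : ℝ, (1 < u * p.1 + v * p.2) →
      (∀ q ∈ S, q ≠ p → u * q.1 + v * q.2 ≤ 1) →
      toR2 p ∈ Set.extremePoints ℝ (convexHull ℝ (toR2 '' S)) := by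
    intro p hpS u v hcut hrest
    have hpK : toR2 p ∈ convexHull ℝ (toR2 '' S) := subset_convexHull ℝ _ ⟨p, hpS, rfl⟩
    have hlinL := linfun_isLinear u v
    set m : ℝ := u * p.1 + v * p.2 with hmdef
    have himgL : ∀ w ∈ toR2 '' S, u * w.1 + v * w.2 ≤ m := by
      rintro w ⟨z, hz, rfl⟩
      rcases eq_or_ne z p with rfl | hzp
      · exact le_refl _
      · exact le_trans (hrest z hz hzp) hcut.le
    have hsing : ∀ w ∈ toR2 '' S, u * w.1 + v * w.2 = m → w ∈ ({toR2 p} : Set (ℝ × ℝ)) := by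
      rintro w ⟨z, hz, rfl⟩ hw
      rcases eq_or_ne z p with rfl | hzp
      · exact rfl
      · exfalso
        rw [toR2_fst, toR2_snd] at hw
        have hr := hrest z hz hzp
        rw [hw] at hr
        linarith
    have hKleL : ∀ w ∈ convexHull ℝ (toR2 '' S), u * w.1 + v * w.2 ≤ m := by
      intro w hw
      exact convexHull_min himgL (convex_halfSpace_le hlinL m) hw
    refine ⟨hpK, ?_⟩
    rintro w1 hw1 w2 hw2 ⟨s, t, hs, ht, hst, hx⟩
    have hcomb : s * (u * w1.1 + v * w1.2) + t * (u * w2.1 + v * w2.2) = m := by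
      have : u * (toR2 p).1 + v * (toR2 p).2 = m := rfl
      rw [← hx] at this
      simp only [Prod.fst_add, Prod.snd_add, Prod.smul_fst, Prod.smul_snd,
        smul_eq_mul] at this
      linear_combination this
    have hle1 : u * w1.1 + v * w1.2 ≤ m := hKleL _ hw1
    have hle2 : u * w2.1 + v * w2.2 ≤ m := hKleL _ hw2
    have hLw1 : u * w1.1 + v * w1.2 = m := by
      by_contra hcon
      have hlt : u * w1.1 + v * w1.2 < m := lt_of_le_of_ne hle1 hcon
      nlinarith [mul_lt_mul_of_pos_left hlt hs, mul_le_mul_of_nonneg_left hle2 ht.le]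
    have hLw2 : u * w2.1 + v * w2.2 = m := by
      by_contra hcon
      have hlt : u * w2.1 + v * w2.2 < m := lt_of_le_of_ne hle2 hcon
      nlinarith [mul_lt_mul_of_pos_left hlt ht, mul_le_mul_of_nonneg_left hle1 hs.le]
    exact face_lemma hlinL (convex_singleton _) himgL hsing hw1 hLw1.ge
  refine ⟨⟨hp1p2, hexpt c1 h1S u1 v1 hc1 hf1, hexpt c2 h2S u2 v2 hc2 hf2, hface⟩, ?_⟩
  -- the line misses the convex hull of the complement
  rw [Set.eq_empty_iff_forall_notMem]
  rintro x ⟨hxspan, hxhull⟩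
  have hspan1 : a * x.1 + b * x.2 = 1 := by
    let W : AffineSubspace ℝ (ℝ × ℝ) :=
      { carrier := {w | a * w.1 + b * w.2 = 1}
        smul_vsub_vadd_mem' := by
          intro c q1 q2 q3 hq1 hq2 hq3
          simp only [Set.mem_setOf_eq] at *
          simp only [vsub_eq_sub, vadd_eq_add, Prod.fst_add, Prod.snd_add, Prod.fst_sub,
            Prod.snd_sub, Prod.smul_fst, Prod.smul_snd, smul_eq_mul]
          linear_combination c * hq1 - c * hq2 + hq3 }
    have hle : affineSpan ℝ {p1, p2} ≤ W := by
      rw [affineSpan_le]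
      rintro w hw
      rcases hw with rfl | hw
      · exact hLp1
      · rw [Set.mem_singleton_iff] at hw
        subst hw
        exact hLp2
    exact hle hxspan
  have hgt : 1 < a * x.1 + b * x.2 := by
    have himgC : toR2 '' (posQuad \ S) ⊆ {w : ℝ × ℝ | 1 < a * w.1 + b * w.2} := by
      rintro w ⟨z, hz, rfl⟩
      exact cI z hz.1.1 hz.1.2 hz.2
    exact convexHull_min himgC (convex_halfSpace_gt hlinh 1) hxhull
  linarith

lemma line_param {a b : ℝ} (hb : b ≠ 0) {P Q X : ℝ × ℝ} (hPQ : P.1 ≠ Q.1)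
    (hP : a * P.1 + b * P.2 = 1) (hQ : a * Q.1 + b * Q.2 = 1)
    (hX : a * X.1 + b * X.2 = 1) :
    ∃ τ : ℝ, X = (1 - τ) • P + τ • Q := by
  obtain ⟨τ, hτ⟩ : ∃ τ : ℝ, τ * (Q.1 - P.1) = X.1 - P.1 :=
    ⟨_, div_mul_cancel₀ _ (sub_ne_zero.mpr (Ne.symm hPQ))⟩
  have hx1 : X.1 = (1 - τ) * P.1 + τ * Q.1 := by linear_combination -hτ
  have hx2 : X.2 = (1 - τ) * P.2 + τ * Q.2 := by
    apply mul_left_cancel₀ hb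
    linear_combination hX - (1 - τ) * hP - τ * hQ - a * hx1
  refine ⟨τ, Prod.ext ?_ ?_⟩
  · simp only [Prod.fst_add, Prod.smul_fst, smul_eq_mul]
    exact hx1
  · simp only [Prod.snd_add, Prod.smul_snd, smul_eq_mul]
    exact hx2

lemma online_mem_segment {K : Set (ℝ × ℝ)} {p1 p2 : ℝ × ℝ} {a b : ℝ} (hb : b ≠ 0)
    (hPQ : p1.1 ≠ p2.1) (hl1 : a * p1.1 + b * p1.2 = 1) (hl2 : a * p2.1 + b * p2.2 = 1)
    (hface : IsExtreme ℝ K (segment ℝ p1 p2))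
    {X : ℝ × ℝ} (hXK : X ∈ K) (hX1 : a * X.1 + b * X.2 = 1) : X ∈ segment ℝ p1 p2 := by
  obtain ⟨τ, hτeq⟩ := line_param hb hPQ hl1 hl2 hX1
  have hX1c : X.1 = (1 - τ) * p1.1 + τ * p2.1 := by
    rw [hτeq]; simp only [Prod.fst_add, Prod.smul_fst, smul_eq_mul]
  have hX2c : X.2 = (1 - τ) * p1.2 + τ * p2.2 := by
    rw [hτeq]; simp only [Prod.snd_add, Prod.smul_snd, smul_eq_mul]
  have hp1K : p1 ∈ K := hface.1 (left_mem_segment ℝ p1 p2)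
  have hp2K : p2 ∈ K := hface.1 (right_mem_segment ℝ p1 p2)
  rcases lt_or_ge τ 0 with hτ | hτ0
  · have h1τ : 0 < 1 - τ := by linarith
    have hopen : p1 ∈ openSegment ℝ X p2 := by
      refine ⟨1 / (1 - τ), -τ / (1 - τ), by positivity, div_pos (by linarith) h1τ, ?_, ?_⟩
      · field_simp
        ring
      · apply Prod.ext
        · simp only [Prod.fst_add, Prod.smul_fst, smul_eq_mul]
          rw [hX1c]; field_simp; try ring
        · simp only [Prod.snd_add, Prod.smul_snd, smul_eq_mul]
          rw [hX2c]; field_simp; try ring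
    exact hface.2 hXK hp2K (left_mem_segment ℝ p1 p2) hopen
  rcases le_or_gt τ 1 with hτ1 | hτ1
  · exact ⟨1 - τ, τ, by linarith, hτ0, by ring, hτeq.symm⟩
  · have hτpos : 0 < τ := by linarith
    have hopen : p2 ∈ openSegment ℝ p1 X := by
      refine ⟨(τ - 1) / τ, 1 / τ, div_pos (by linarith) hτpos, by positivity, ?_, ?_⟩
      · field_simp
        try ring
      · apply Prod.ext
        · simp only [Prod.fst_add, Prod.smul_fst, smul_eq_mul]
          rw [hX1c]; field_simp; try ring
        · simp only [Prod.snd_add, Prod.smul_snd, smul_eq_mul]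
          rw [hX2c]; field_simp; try ring
    exact hface.right_mem_of_mem_openSegment hp1K hXK (right_mem_segment ℝ p1 p2) hopen

lemma line_coeffs {x1 y1 x2 y2 : ℝ} (h1 : 1 ≤ x1) (h2 : 1 ≤ y1) (h3 : 1 ≤ x2) (h4 : 1 ≤ y2)
    (horient : (x2 + 1 ≤ x1 ∧ y1 + 1 ≤ y2) ∨ (x1 + 1 ≤ x2 ∧ y2 + 1 ≤ y1)) :
    (x1 * y2 - x2 * y1 ≠ 0) ∧
      ∃ a b : ℝ, 0 < a ∧ 0 < b ∧ a * x1 + b * y1 = 1 ∧ a * x2 + b * y2 = 1 := by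
  have hD : x1 * y2 - x2 * y1 ≠ 0 := by
    rcases horient with ⟨u, v⟩ | ⟨u, v⟩
    · have : (x2 + 1) * (y1 + 1) ≤ x1 * y2 :=
        mul_le_mul u v (by linarith) (by linarith)
      intro h
      nlinarith
    · have : (x1 + 1) * (y2 + 1) ≤ x2 * y1 :=
        mul_le_mul u v (by linarith) (by linarith)
      intro h
      nlinarith
  refine ⟨hD, (y2 - y1) / (x1 * y2 - x2 * y1), (x1 - x2) / (x1 * y2 - x2 * y1), ?_, ?_,
    by rw [div_mul_eq_mul_div, div_mul_eq_mul_div, ← add_div, div_eq_one_iff_eq hD]; ring,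
    by rw [div_mul_eq_mul_div, div_mul_eq_mul_div, ← add_div, div_eq_one_iff_eq hD]; ring⟩
  · rcases horient with ⟨u, v⟩ | ⟨u, v⟩
    · refine div_pos (by linarith) ?_
      have : (x2 + 1) * (y1 + 1) ≤ x1 * y2 := mul_le_mul u v (by linarith) (by linarith)
      nlinarith
    · refine div_pos_iff.mpr (Or.inr ⟨by linarith, ?_⟩)
      have : (x1 + 1) * (y2 + 1) ≤ x2 * y1 := mul_le_mul u v (by linarith) (by linarith)
      nlinarith
  · rcases horient with ⟨u, v⟩ | ⟨u, v⟩
    · refine div_pos (by linarith) ?_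
      have : (x2 + 1) * (y1 + 1) ≤ x1 * y2 := mul_le_mul u v (by linarith) (by linarith)
      nlinarith
    · refine div_pos_iff.mpr (Or.inr ⟨by linarith, ?_⟩)
      have : (x1 + 1) * (y2 + 1) ≤ x2 * y1 := mul_le_mul u v (by linarith) (by linarith)
      nlinarith

set_option maxHeartbeats 1000000 in
lemma removable_of_claims
    {S : Set (ℕ × ℕ)} (hfin : S.Finite)
    {p q : ℕ × ℕ} (hpS : p ∈ S) (hqS : q ∈ S)
    (hcoord : ∀ z ∈ S, 1 ≤ z.1 ∧ 1 ≤ z.2)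
    (hxpq : (p.1 : ℝ) ≠ q.1)
    (hdet : (p.1 : ℝ) * q.2 - (q.1 : ℝ) * p.2 ≠ 0)
    {a b : ℝ} (ha : 0 < a) (hb : 0 < b)
    (hlp : a * p.1 + b * p.2 = 1) (hlq : a * q.1 + b * q.2 = 1)
    (H1 : ∀ z ∈ S, a * z.1 + b * z.2 ≤ 1)
    (H2 : ∀ z ∈ S, a * z.1 + b * z.2 = 1 →
       ∃ θ : ℝ, 0 ≤ θ ∧ θ ≤ 1 ∧ (z.1 : ℝ) = θ * p.1 + (1 - θ) * q.1 ∧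
         (z.2 : ℝ) = θ * p.2 + (1 - θ) * q.2)
    (H3 : ∀ d : ℕ × ℕ, 1 ≤ d.1 → 1 ≤ d.2 → d ∉ S → 1 < a * d.1 + b * d.2) :
    RemovableCell S p := by
  have hqp : q ≠ p := by
    intro h; exact hxpq (by rw [h])
  -- the normalized parameter of a cell on the segment
  have hTheta : ∀ z ∈ S, a * z.1 + b * z.2 = 1 → z ≠ p →
      ∃ θ : ℝ, 0 ≤ θ ∧ θ < 1 ∧ θ * ((p.1:ℝ) - q.1) = (z.1:ℝ) - q.1 ∧
        (z.1 : ℝ) = θ * p.1 + (1 - θ) * q.1 ∧ (z.2 : ℝ) = θ * p.2 + (1 - θ) * q.2 := by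
    intro z hz hz1 hzp
    obtain ⟨θ, h0, h1, hxe, hye⟩ := H2 z hz hz1
    refine ⟨θ, h0, ?_, by linear_combination -hxe, hxe, hye⟩
    rcases lt_or_eq_of_le h1 with h | h
    · exact h
    · exfalso
      apply hzp
      rw [h] at hxe hye
      have e1 : (z.1 : ℝ) = p.1 := by linarith
      have e2 : (z.2 : ℝ) = p.2 := by linarith
      exact Prod.ext (by exact_mod_cast e1) (by exact_mod_cast e2)
  -- the set of on-line cells other than p, and the maximal parameter t
  set T : Set (ℕ × ℕ) := {z ∈ S | a * z.1 + b * z.2 = 1 ∧ z ≠ p} with hTdef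
  have hTfin : T.Finite := hfin.subset (fun z hz => hz.1)
  have hTne : T.Nonempty := ⟨q, hqS, hlq, hqp⟩
  obtain ⟨zm, hzmT, hzmax⟩ := Set.exists_max_image T
    (fun z : ℕ × ℕ => ((z.1 : ℝ) - q.1) / ((p.1 : ℝ) - q.1)) hTfin hTne
  obtain ⟨t, ht0, ht1, htmul, _, _⟩ := hTheta zm hzmT.1 hzmT.2.1 hzmT.2.2
  have hpq : (p.1 : ℝ) - q.1 ≠ 0 := sub_ne_zero.mpr hxpq
  have htval : t = ((zm.1 : ℝ) - q.1) / ((p.1 : ℝ) - q.1) := by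
    rw [eq_div_iff hpq]
    linear_combination htmul
  -- every on-line cell has parameter at most t
  have hparam : ∀ z ∈ S, a * z.1 + b * z.2 = 1 → z ≠ p →
      ∃ θ : ℝ, 0 ≤ θ ∧ θ ≤ t ∧
        (z.1 : ℝ) = θ * p.1 + (1 - θ) * q.1 ∧ (z.2 : ℝ) = θ * p.2 + (1 - θ) * q.2 := by
    intro z hz hz1 hzp
    obtain ⟨θ, h0, h1, hmul, hxe, hye⟩ := hTheta z hz hz1 hzp
    refine ⟨θ, h0, ?_, hxe, hye⟩
    have hθval : θ = ((z.1 : ℝ) - q.1) / ((p.1 : ℝ) - q.1) := by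
      rw [eq_div_iff hpq]
      linear_combination hmul
    rw [hθval, htval]
    exact hzmax z ⟨hz, hz1, hzp⟩
  -- choose the tilt functional g
  set G : ℝ := t / (1 - t) + 1 with hGdef
  have hG0 : 0 ≤ G := by
    rw [hGdef]
    have : 0 ≤ t / (1 - t) := div_nonneg ht0 (by linarith)
    linarith
  have h1t : (1 : ℝ) - t ≠ 0 := ne_of_gt (by linarith)
  have hkey : t * (1 + G) - G = t - 1 := by
    rw [hGdef]
    field_simp
    ring
  obtain ⟨gu, gv, hgp, hgq⟩ : ∃ gu gv : ℝ,
      gu * p.1 + gv * p.2 = 1 ∧ gu * q.1 + gv * q.2 = -G := by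
    refine ⟨((q.2 : ℝ) + G * p.2) / ((p.1 : ℝ) * q.2 - (q.1 : ℝ) * p.2),
      (-(G * p.1) - q.1) / ((p.1 : ℝ) * q.2 - (q.1 : ℝ) * p.2), ?_, ?_⟩
    · rw [div_mul_eq_mul_div, div_mul_eq_mul_div, ← add_div, div_eq_iff hdet]
      ring
    · rw [div_mul_eq_mul_div, div_mul_eq_mul_div, ← add_div, div_eq_iff hdet]
      ring
  -- on-line cells other than p get strictly negative tilt
  have honline : ∀ z ∈ S, a * z.1 + b * z.2 = 1 → z ≠ p → gu * z.1 + gv * z.2 ≤ t - 1 := by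
    intro z hz h1 hzp
    obtain ⟨θ, h0, hθt, hxe, hye⟩ := hparam z hz h1 hzp
    have hgz : gu * z.1 + gv * z.2 = θ * (1 + G) - G := by
      linear_combination gu * hxe + gv * hye + θ * hgp + (1 - θ) * hgq
    rw [hgz]
    have hmono : θ * (1 + G) ≤ t * (1 + G) := mul_le_mul_of_nonneg_right hθt (by linarith)
    linarith [hkey]
  -- finite bad sets
  set N : ℕ := ⌈2 / a⌉₊ + ⌈2 / b⌉₊ + 1 with hNdef
  have hNa : 2 / a ≤ (N : ℝ) := by
    rw [hNdef]
    push_cast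
    have h1 := Nat.le_ceil (2 / a)
    have h2 : (0:ℝ) ≤ (⌈2 / b⌉₊ : ℝ) := by positivity
    linarith
  have hNb : 2 / b ≤ (N : ℝ) := by
    rw [hNdef]
    push_cast
    have h1 := Nat.le_ceil (2 / b)
    have h2 : (0:ℝ) ≤ (⌈2 / a⌉₊ : ℝ) := by positivity
    linarith
  set F : Set (ℕ × ℕ) := {d | d.1 ≤ N ∧ d.2 ≤ N ∧ 1 ≤ d.1 ∧ 1 ≤ d.2 ∧ d ∉ S} with hFdef
  have hFfin : F.Finite := (Set.finite_Icc ((1:ℕ),(1:ℕ)) (N,N)).subset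
    (fun d hd => ⟨⟨hd.2.2.1, hd.2.2.2.1⟩, ⟨hd.1, hd.2.1⟩⟩)
  set S1 : Set (ℕ × ℕ) := {z ∈ S | a * z.1 + b * z.2 < 1} with hS1def
  have hS1fin : S1.Finite := hfin.subset (fun z hz => hz.1)
  -- eventual smallness conditions
  have hev : ∀ᶠ ε in nhdsWithin (0:ℝ) (Set.Ioi 0),
      0 < ε ∧ ε * (|gu| + |gv|) < min (a/2) (b/2) ∧
      (∀ z ∈ S1, (a + ε*gu) * z.1 + (b + ε*gv) * z.2 < 1) ∧
      (∀ d ∈ F, 1 < (a + ε*gu) * d.1 + (b + ε*gv) * d.2) := by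
    refine Filter.Eventually.and ?_ (Filter.Eventually.and ?_ (Filter.Eventually.and ?_ ?_))
    · exact eventually_nhdsWithin_of_forall (fun x hx => hx)
    · have htd : Filter.Tendsto (fun ε : ℝ => ε * (|gu| + |gv|))
          (nhdsWithin (0:ℝ) (Set.Ioi 0)) (nhds 0) := by
        have h1 : Filter.Tendsto (fun ε : ℝ => ε * (|gu| + |gv|)) (nhds 0)
            (nhds (0 * (|gu| + |gv|))) := (continuous_id.mul continuous_const).tendsto 0
        rw [zero_mul] at h1
        exact h1.mono_left nhdsWithin_le_nhds
      exact htd.eventually_lt_const (by positivity)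
    · rw [Set.Finite.eventually_all hS1fin]
      intro z hz
      have hc : Continuous (fun ε : ℝ => (a + ε*gu) * (z.1:ℝ) + (b + ε*gv) * (z.2:ℝ)) :=
        ((continuous_const.add (continuous_id.mul continuous_const)).mul
          continuous_const).add
          ((continuous_const.add (continuous_id.mul continuous_const)).mul continuous_const)
      have h1 := (hc.tendsto 0).mono_left
        (nhdsWithin_le_nhds : nhdsWithin (0:ℝ) (Set.Ioi 0) ≤ nhds 0)
      simp only [zero_mul, add_zero] at h1
      exact h1.eventually_lt_const hz.2
    · rw [Set.Finite.eventually_all hFfin]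
      intro d hd
      have hc : Continuous (fun ε : ℝ => (a + ε*gu) * (d.1:ℝ) + (b + ε*gv) * (d.2:ℝ)) :=
        ((continuous_const.add (continuous_id.mul continuous_const)).mul
          continuous_const).add
          ((continuous_const.add (continuous_id.mul continuous_const)).mul continuous_const)
      have h1 := (hc.tendsto 0).mono_left
        (nhdsWithin_le_nhds : nhdsWithin (0:ℝ) (Set.Ioi 0) ≤ nhds 0)
      simp only [zero_mul, add_zero] at h1
      exact h1.eventually_const_lt (H3 d hd.2.2.1 hd.2.2.2.1 hd.2.2.2.2)
  obtain ⟨ε, hε0, hεsmall, hεS1, hεF⟩ := hev.exists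
  have habs : ε * gu ≥ -(ε * (|gu| + |gv|)) ∧ ε * gv ≥ -(ε * (|gu| + |gv|)) := by
    constructor
    · nlinarith [neg_abs_le gu, abs_nonneg gv, hε0.le]
    · nlinarith [neg_abs_le gv, abs_nonneg gu, hε0.le]
  have hsm_a : ε * (|gu| + |gv|) < a / 2 := lt_of_lt_of_le hεsmall (min_le_left _ _)
  have hsm_b : ε * (|gu| + |gv|) < b / 2 := lt_of_lt_of_le hεsmall (min_le_right _ _)
  have hA : 0 < a + ε * gu := by linarith [habs.1]
  have hB : 0 < b + ε * gv := by linarith [habs.2]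
  have hA2 : a / 2 ≤ a + ε * gu := by linarith [habs.1]
  have hB2 : b / 2 ≤ b + ε * gv := by linarith [habs.2]
  refine ⟨hpS, tri_iff_cut.mpr ⟨a + ε*gu, b + ε*gv, hA, hB, ?_⟩⟩
  ext d
  simp only [Set.mem_diff, Set.mem_singleton_iff, mem_cut]
  constructor
  · rintro ⟨hdS, hdp⟩
    obtain ⟨hd1, hd2⟩ := hcoord d hdS
    refine ⟨hd1, hd2, ?_⟩
    rcases lt_or_eq_of_le (H1 d hdS) with hlt | heq
    · exact (hεS1 d ⟨hdS, hlt⟩).le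
    · have hg := honline d hdS heq hdp
      have hexp : (a + ε*gu) * d.1 + (b + ε*gv) * d.2
          = (a * d.1 + b * d.2) + ε * (gu * d.1 + gv * d.2) := by ring
      rw [hexp, heq]
      have hneg : ε * (gu * d.1 + gv * d.2) ≤ ε * (t - 1) :=
        mul_le_mul_of_nonneg_left hg hε0.le
      have : ε * (t - 1) ≤ 0 := mul_nonpos_of_nonneg_of_nonpos hε0.le (by linarith)
      linarith
  · rintro ⟨hd1, hd2, hdle⟩
    have hdS : d ∈ S := by
      by_contra hdS
      rcases le_or_gt d.1 N with hN1 | hN1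
      · rcases le_or_gt d.2 N with hN2 | hN2
        · exact absurd hdle (not_le.mpr (hεF d ⟨hN1, hN2, hd1, hd2, hdS⟩))
        · -- d.2 > N : far in the vertical direction
          have hd2R : ((N : ℝ) + 1) ≤ d.2 := by exact_mod_cast hN2
          have hd1R : (1 : ℝ) ≤ d.1 := by exact_mod_cast hd1
          have hv1 : (b/2) * ((N:ℝ) + 1) ≤ (b + ε*gv) * d.2 := by
            have e1 : (b/2) * ((N:ℝ)+1) ≤ (b/2) * d.2 :=
              mul_le_mul_of_nonneg_left hd2R (by positivity)
            have e2 : (b/2) * (d.2:ℝ) ≤ (b + ε*gv) * d.2 :=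
              mul_le_mul_of_nonneg_right hB2 (by positivity)
            linarith
          have hv2 : (0:ℝ) ≤ (a + ε*gu) * d.1 :=
            mul_nonneg hA.le (by positivity)
          have hval : (b/2) * ((N:ℝ)+1) ≥ 1 + b/2 := by
            have e3 : (b/2) * ((N:ℝ)+1) ≥ (b/2) * (2/b + 1) :=
              mul_le_mul_of_nonneg_left (by linarith) (by positivity)
            have e4 : (b/2) * (2/b + 1) = 1 + b/2 := by field_simp
            linarith
          linarith
      · -- d.1 > N : far in the horizontal direction
        have hd1R : ((N : ℝ) + 1) ≤ d.1 := by exact_mod_cast hN1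
        have hd2R : (1 : ℝ) ≤ d.2 := by exact_mod_cast hd2
        have hv1 : (a/2) * ((N:ℝ) + 1) ≤ (a + ε*gu) * d.1 := by
          have e1 : (a/2) * ((N:ℝ)+1) ≤ (a/2) * d.1 :=
            mul_le_mul_of_nonneg_left hd1R (by positivity)
          have e2 : (a/2) * (d.1:ℝ) ≤ (a + ε*gu) * d.1 :=
            mul_le_mul_of_nonneg_right hA2 (by positivity)
          linarith
        have hv2 : (0:ℝ) ≤ (b + ε*gv) * d.2 :=
          mul_nonneg hB.le (by positivity)
        have hval : (a/2) * ((N:ℝ)+1) ≥ 1 + a/2 := by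
          have e3 : (a/2) * ((N:ℝ)+1) ≥ (a/2) * (2/a + 1) :=
            mul_le_mul_of_nonneg_left (by linarith) (by positivity)
          have e4 : (a/2) * (2/a + 1) = 1 + a/2 := by field_simp
          linarith
        linarith
    refine ⟨hdS, ?_⟩
    intro hdp
    rw [hdp] at hdle
    have hexp : (a + ε*gu) * p.1 + (b + ε*gv) * p.2
        = (a * p.1 + b * p.2) + ε * (gu * p.1 + gv * p.2) := by ring
    rw [hexp, hlp, hgp, mul_one] at hdle
    linarith

lemma line_far_point {S : Set (ℕ × ℕ)} {α β : ℝ} (hα : 0 < α) (hβ : 0 < β)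
    (hSeq : S = Cut α β) {c1 c2 : ℕ × ℕ} (h2S : c2 ∈ S) (hne : c1 ≠ c2)
    (hle1 : c1.1 ≤ c2.1) (hle2 : c1.2 ≤ c2.2)
    (hline : (affineSpan ℝ {toR2 c1, toR2 c2} : Set (ℝ × ℝ)) ∩
      convexHull ℝ (toR2 '' (posQuad \ S)) = ∅) : False := by
  have h22 : 1 ≤ c2.1 ∧ 1 ≤ c2.2 := by rw [hSeq] at h2S; exact ⟨h2S.1, h2S.2.1⟩
  have hδpos : 0 < c2.1 - c1.1 + (c2.2 - c1.2) := by
    have : c1.1 ≠ c2.1 ∨ c1.2 ≠ c2.2 := by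
      by_contra h
      push_neg at h
      exact hne (Prod.ext h.1 h.2)
    omega
  have hd1 : ((c2.1 - c1.1 : ℕ) : ℝ) = (c2.1 : ℝ) - c1.1 := by
    rw [Nat.cast_sub hle1]
  have hd2 : ((c2.2 - c1.2 : ℕ) : ℝ) = (c2.2 : ℝ) - c1.2 := by
    rw [Nat.cast_sub hle2]
  set κ : ℝ := α * ((c2.1 - c1.1 : ℕ) : ℝ) + β * ((c2.2 - c1.2 : ℕ) : ℝ) with hκdef
  have hκ : 0 < κ := by
    rw [hκdef]
    rcases Nat.lt_or_ge 0 (c2.1 - c1.1) with h | h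
    · have e1 : (1 : ℝ) ≤ ((c2.1 - c1.1 : ℕ) : ℝ) := by exact_mod_cast h
      have e2 : (0 : ℝ) ≤ ((c2.2 - c1.2 : ℕ) : ℝ) := by positivity
      nlinarith
    · have h2 : 0 < c2.2 - c1.2 := by omega
      have e1 : (1 : ℝ) ≤ ((c2.2 - c1.2 : ℕ) : ℝ) := by exact_mod_cast h2
      have e2 : (0 : ℝ) ≤ ((c2.1 - c1.1 : ℕ) : ℝ) := by positivity
      nlinarith
  set t : ℕ := ⌈1 / κ⌉₊ + 1 with htdef
  have ht : 1 < (t : ℝ) * κ := by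
    have h1 : 1 / κ < (t : ℝ) := by
      rw [htdef]
      push_cast
      linarith [Nat.le_ceil (1 / κ)]
    calc 1 = (1 / κ) * κ := by field_simp
    _ < (t : ℝ) * κ := mul_lt_mul_of_pos_right h1 hκ
  set w : ℕ × ℕ := (c2.1 + t * (c2.1 - c1.1), c2.2 + t * (c2.2 - c1.2)) with hwdef
  have hwc1 : (w.1 : ℝ) = c2.1 + t * ((c2.1 : ℝ) - c1.1) := by
    rw [hwdef]
    push_cast [Nat.cast_sub hle1]
    ring
  have hwc2 : (w.2 : ℝ) = c2.2 + t * ((c2.2 : ℝ) - c1.2) := by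
    rw [hwdef]
    push_cast [Nat.cast_sub hle2]
    ring
  have hfc2 : α * (c2.1 : ℝ) + β * c2.2 ≤ 1 := by rw [hSeq] at h2S; exact h2S.2.2
  have hfc2pos : 0 < α * (c2.1 : ℝ) + β * c2.2 := by
    have e1 : (1:ℝ) ≤ c2.1 := by exact_mod_cast h22.1
    have e2 : (1:ℝ) ≤ c2.2 := by exact_mod_cast h22.2
    nlinarith
  have hwS : w ∉ S := by
    rw [hSeq]
    rintro ⟨-, -, h3⟩
    rw [hwc1, hwc2] at h3
    have hexp : α * ((c2.1:ℝ) + t * ((c2.1 : ℝ) - c1.1)) + β * ((c2.2:ℝ) + t * ((c2.2 : ℝ) - c1.2))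
        = (α * c2.1 + β * c2.2) + (t : ℝ) * κ := by
      rw [hκdef, hd1, hd2]
      ring
    rw [hexp] at h3
    linarith
  have hw1 : 1 ≤ w.1 := by rw [hwdef]; simp; omega
  have hw2 : 1 ≤ w.2 := by rw [hwdef]; simp; omega
  have hmemhull : toR2 w ∈ convexHull ℝ (toR2 '' (posQuad \ S)) :=
    subset_convexHull ℝ _ ⟨w, ⟨⟨hw1, hw2⟩, hwS⟩, rfl⟩
  have heq : toR2 w = AffineMap.lineMap (toR2 c1) (toR2 c2) ((1 : ℝ) + t) := by
    rw [AffineMap.lineMap_apply_module]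
    apply Prod.ext
    · simp only [Prod.fst_add, Prod.smul_fst, smul_eq_mul]
      show (w.1 : ℝ) = (1 - (1 + t)) * (c1.1 : ℝ) + (1 + t) * (c2.1 : ℝ)
      rw [hwc1]; ring
    · simp only [Prod.snd_add, Prod.smul_snd, smul_eq_mul]
      show (w.2 : ℝ) = (1 - (1 + t)) * (c1.2 : ℝ) + (1 + t) * (c2.2 : ℝ)
      rw [hwc2]; ring
  have hmemspan : toR2 w ∈ (affineSpan ℝ {toR2 c1, toR2 c2} : Set (ℝ × ℝ)) := by
    rw [heq]
    exact AffineMap.lineMap_mem_affineSpan_pair _ _ _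
  rw [Set.eq_empty_iff_forall_notMem] at hline
  exact hline (toR2 w) ⟨hmemspan, hmemhull⟩

set_option maxHeartbeats 1000000 in
lemma reverse_dir {S : Set (ℕ × ℕ)} {α β : ℝ} (hα : 0 < α) (hβ : 0 < β)
    (hSeq : S = Cut α β) {c1 c2 : ℕ × ℕ} (h1S : c1 ∈ S) (h2S : c2 ∈ S) (hne : c1 ≠ c2)
    (hCV : ConsecutiveVertices (convexHull ℝ (toR2 '' S)) (toR2 c1) (toR2 c2))
    (hline : (affineSpan ℝ {toR2 c1, toR2 c2} : Set (ℝ × ℝ)) ∩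
      convexHull ℝ (toR2 '' (posQuad \ S)) = ∅) :
    RemovableCell S c1 ∧ RemovableCell S c2 := by
  obtain ⟨hp12, hex1, hex2, hface⟩ := hCV
  have hcoord : ∀ z ∈ S, 1 ≤ z.1 ∧ 1 ≤ z.2 := by
    intro z hz; rw [hSeq] at hz; exact ⟨hz.1, hz.2.1⟩
  have hfS : ∀ z ∈ S, α * z.1 + β * z.2 ≤ 1 := by
    intro z hz; rw [hSeq] at hz; exact hz.2.2
  have h11 := hcoord c1 h1S
  have h22 := hcoord c2 h2S
  have hfin : S.Finite := hSeq ▸ cut_finite hα hβ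
  -- incomparability
  have hnc1 : ¬(c1.1 ≤ c2.1 ∧ c1.2 ≤ c2.2) := fun ⟨u, v⟩ =>
    line_far_point hα hβ hSeq h2S hne u v hline
  have hnc2 : ¬(c2.1 ≤ c1.1 ∧ c2.2 ≤ c1.2) := fun ⟨u, v⟩ =>
    line_far_point hα hβ hSeq h1S (Ne.symm hne) u v (by rwa [Set.pair_comm])
  have horient : (c2.1 + 1 ≤ c1.1 ∧ c1.2 + 1 ≤ c2.2) ∨
      (c1.1 + 1 ≤ c2.1 ∧ c2.2 + 1 ≤ c1.2) := by omega
  have horientR : ((c2.1:ℝ) + 1 ≤ c1.1 ∧ (c1.2:ℝ) + 1 ≤ c2.2) ∨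
      ((c1.1:ℝ) + 1 ≤ c2.1 ∧ (c2.2:ℝ) + 1 ≤ c1.2) := by
    rcases horient with ⟨u, v⟩ | ⟨u, v⟩
    · exact Or.inl ⟨by exact_mod_cast u, by exact_mod_cast v⟩
    · exact Or.inr ⟨by exact_mod_cast u, by exact_mod_cast v⟩
  obtain ⟨hD, a, b, ha, hb, hl1, hl2⟩ := line_coeffs
    (show (1:ℝ) ≤ c1.1 by exact_mod_cast h11.1) (show (1:ℝ) ≤ c1.2 by exact_mod_cast h11.2)
    (show (1:ℝ) ≤ c2.1 by exact_mod_cast h22.1) (show (1:ℝ) ≤ c2.2 by exact_mod_cast h22.2)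
    horientR
  have hx12 : (c1.1 : ℝ) ≠ c2.1 := by
    rcases horientR with ⟨u, -⟩ | ⟨u, -⟩
    · exact ne_of_gt (by linarith)
    · exact ne_of_lt (by linarith)
  have hsegval : ∀ w ∈ segment ℝ (toR2 c1) (toR2 c2), a * w.1 + b * w.2 = 1 := by
    rintro w ⟨s, t, hs, ht, hst, rfl⟩
    simp only [Prod.fst_add, Prod.snd_add, Prod.smul_fst, Prod.smul_snd, smul_eq_mul]
    show a * (s * (c1.1:ℝ) + t * c2.1) + b * (s * (c1.2:ℝ) + t * c2.2) = 1
    linear_combination s * hl1 + t * hl2 + hst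
  -- (1,1) is a cell and lies strictly below the line
  have h11S : ((1, 1) : ℕ × ℕ) ∈ S := by
    rw [hSeq]
    refine ⟨le_refl _, le_refl _, ?_⟩
    have e1 : (1:ℝ) ≤ c1.1 := by exact_mod_cast h11.1
    have e2 : (1:ℝ) ≤ c1.2 := by exact_mod_cast h11.2
    have := hfS c1 h1S
    show α * ((1:ℕ):ℝ) + β * ((1:ℕ):ℝ) ≤ 1
    push_cast
    nlinarith
  have hab1 : a + b < 1 := by
    have e1 : (1:ℝ) ≤ c1.1 := by exact_mod_cast h11.1
    have e2 : (1:ℝ) ≤ c1.2 := by exact_mod_cast h11.2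
    have e3 : (1:ℝ) ≤ c2.1 := by exact_mod_cast h22.1
    have e4 : (1:ℝ) ≤ c2.2 := by exact_mod_cast h22.2
    have hle : a + b ≤ 1 := by nlinarith
    rcases lt_or_eq_of_le hle with h | h
    · exact h
    · exfalso
      have k1 : a * ((c1.1:ℝ) - 1) + b * ((c1.2:ℝ) - 1) = 0 := by linear_combination hl1 - h
      have k2 : a * ((c2.1:ℝ) - 1) + b * ((c2.2:ℝ) - 1) = 0 := by linear_combination hl2 - h
      have t1 : (0:ℝ) ≤ a * ((c1.1:ℝ) - 1) := mul_nonneg ha.le (by linarith)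
      have t2 : (0:ℝ) ≤ b * ((c1.2:ℝ) - 1) := mul_nonneg hb.le (by linarith)
      have t3 : (0:ℝ) ≤ a * ((c2.1:ℝ) - 1) := mul_nonneg ha.le (by linarith)
      have t4 : (0:ℝ) ≤ b * ((c2.2:ℝ) - 1) := mul_nonneg hb.le (by linarith)
      have z1 : a * ((c1.1:ℝ) - 1) = 0 := by linarith
      have z3 : a * ((c2.1:ℝ) - 1) = 0 := by linarith
      have w1 : (c1.1:ℝ) = 1 := by
        rcases mul_eq_zero.mp z1 with h' | h'
        · exact absurd h' (ne_of_gt ha)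
        · linarith
      have w3 : (c2.1:ℝ) = 1 := by
        rcases mul_eq_zero.mp z3 with h' | h'
        · exact absurd h' (ne_of_gt ha)
        · linarith
      exact hx12 (by rw [w1, w3])
  -- claim H1
  have H1 : ∀ z ∈ S, a * z.1 + b * z.2 ≤ 1 := by
    intro z hz
    by_contra hcon
    push_neg at hcon
    have heK : toR2 z ∈ convexHull ℝ (toR2 '' S) := subset_convexHull ℝ _ ⟨z, hz, rfl⟩
    have hwK : toR2 ((1,1) : ℕ × ℕ) ∈ convexHull ℝ (toR2 '' S) :=
      subset_convexHull ℝ _ ⟨(1,1), h11S, rfl⟩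
    set Le : ℝ := a * (z.1 : ℝ) + b * z.2 with hLedef
    have hLw : a * (toR2 ((1,1):ℕ×ℕ)).1 + b * (toR2 ((1,1):ℕ×ℕ)).2 = a + b := by
      show a * ((1:ℕ):ℝ) + b * ((1:ℕ):ℝ) = a + b
      push_cast; ring
    have hden : 0 < Le - (a + b) := by rw [hLedef]; linarith
    obtain ⟨σ, hσmul⟩ : ∃ σ : ℝ, σ * (Le - (a + b)) = 1 - (a + b) :=
      ⟨_, div_mul_cancel₀ _ (ne_of_gt hden)⟩
    have hσ0 : 0 < σ := by nlinarith
    have hσ1 : σ < 1 := by nlinarith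
    set A : ℝ × ℝ := σ • toR2 z + (1 - σ) • toR2 ((1,1) : ℕ × ℕ) with hAdef
    have hAval : a * A.1 + b * A.2 = 1 := by
      rw [hAdef]
      simp only [Prod.fst_add, Prod.snd_add, Prod.smul_fst, Prod.smul_snd, smul_eq_mul]
      show a * (σ * (z.1:ℝ) + (1 - σ) * ((1:ℕ):ℝ)) + b * (σ * (z.2:ℝ) + (1 - σ) * ((1:ℕ):ℝ)) = 1
      push_cast
      linear_combination hσmul
    have hAK : A ∈ convexHull ℝ (toR2 '' S) := by
      rw [hAdef]
      exact (convex_convexHull ℝ _) heK hwK hσ0.le (by linarith) (by ring)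
    have hAseg : A ∈ segment ℝ (toR2 c1) (toR2 c2) :=
      online_mem_segment (ne_of_gt hb) hx12 hl1 hl2 hface hAK hAval
    have hAopen : A ∈ openSegment ℝ (toR2 z) (toR2 ((1,1) : ℕ × ℕ)) :=
      ⟨σ, 1 - σ, hσ0, by linarith, by ring, rfl⟩
    have := hface.2 heK hwK hAseg hAopen
    have := hsegval _ this
    rw [hLedef] at hcon
    exact absurd this (by show ¬ (a * (z.1:ℝ) + b * (z.2:ℝ) = 1); linarith)
  -- claim H2
  have H2 : ∀ z ∈ S, a * z.1 + b * z.2 = 1 →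
      ∃ θ : ℝ, 0 ≤ θ ∧ θ ≤ 1 ∧ (z.1 : ℝ) = θ * c1.1 + (1 - θ) * c2.1 ∧
        (z.2 : ℝ) = θ * c1.2 + (1 - θ) * c2.2 := by
    intro z hz h1
    have hzK : toR2 z ∈ convexHull ℝ (toR2 '' S) := subset_convexHull ℝ _ ⟨z, hz, rfl⟩
    obtain ⟨s, t, hs, ht, hst, heq⟩ :=
      online_mem_segment (ne_of_gt hb) hx12 hl1 hl2 hface hzK h1
    have h1c : s * (c1.1:ℝ) + t * c2.1 = z.1 := by
      have := congrArg Prod.fst heq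
      simpa [Prod.fst_add, Prod.smul_fst, smul_eq_mul, toR2] using this
    have h2c : s * (c1.2:ℝ) + t * c2.2 = z.2 := by
      have := congrArg Prod.snd heq
      simpa [Prod.snd_add, Prod.smul_snd, smul_eq_mul, toR2] using this
    exact ⟨s, hs, by linarith, by linear_combination -h1c + (c2.1:ℝ) * hst,
      by linear_combination -h2c + (c2.2:ℝ) * hst⟩
  -- claim H3
  have H3 : ∀ d : ℕ × ℕ, 1 ≤ d.1 → 1 ≤ d.2 → d ∉ S → 1 < a * d.1 + b * d.2 := by
    intro d hd1 hd2 hdS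
    by_contra hcon
    push_neg at hcon
    obtain ⟨M, hM1, hMf, hMl⟩ : ∃ M : ℕ, 1 ≤ M ∧ 1 < α * M + β * M ∧ 1 < a * M + b * M := by
      refine ⟨⌈(α + β)⁻¹⌉₊ + ⌈(a + b)⁻¹⌉₊ + 1, by omega, ?_, ?_⟩
      · have hMge : (α + β)⁻¹ + 1 ≤ ((⌈(α + β)⁻¹⌉₊ + ⌈(a + b)⁻¹⌉₊ + 1 : ℕ) : ℝ) := by
          push_cast
          have h1 := Nat.le_ceil ((α + β)⁻¹)
          have h2 : (0:ℝ) ≤ (⌈(a + b)⁻¹⌉₊ : ℝ) := by positivity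
          linarith
        have hpos : (0:ℝ) < α + β := by linarith
        have : 1 = (α + β) * (α + β)⁻¹ := (mul_inv_cancel₀ (ne_of_gt hpos)).symm
        nlinarith
      · have hMge : (a + b)⁻¹ + 1 ≤ ((⌈(α + β)⁻¹⌉₊ + ⌈(a + b)⁻¹⌉₊ + 1 : ℕ) : ℝ) := by
          push_cast
          have h1 := Nat.le_ceil ((a + b)⁻¹)
          have h2 : (0:ℝ) ≤ (⌈(α + β)⁻¹⌉₊ : ℝ) := by positivity
          linarith
        have hpos : (0:ℝ) < a + b := by linarith
        have : 1 = (a + b) * (a + b)⁻¹ := (mul_inv_cancel₀ (ne_of_gt hpos)).symm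
        nlinarith
    have hwS : ((M, M) : ℕ × ℕ) ∉ S := by
      rw [hSeq]
      rintro ⟨-, -, h3⟩
      exact absurd h3 (not_le.mpr hMf)
    have hdhull : toR2 d ∈ convexHull ℝ (toR2 '' (posQuad \ S)) :=
      subset_convexHull ℝ _ ⟨d, ⟨⟨hd1, hd2⟩, hdS⟩, rfl⟩
    have hwhull : toR2 ((M, M) : ℕ × ℕ) ∈ convexHull ℝ (toR2 '' (posQuad \ S)) :=
      subset_convexHull ℝ _ ⟨(M, M), ⟨⟨hM1, hM1⟩, hwS⟩, rfl⟩
    have hLw : a * (toR2 ((M,M):ℕ×ℕ)).1 + b * (toR2 ((M,M):ℕ×ℕ)).2 = a * M + b * M := rfl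
    have hden : 0 < (a * M + b * M) - (a * (d.1:ℝ) + b * d.2) := by linarith
    obtain ⟨σ, hσmul⟩ : ∃ σ : ℝ,
        σ * ((a * M + b * M) - (a * (d.1:ℝ) + b * d.2)) = 1 - (a * (d.1:ℝ) + b * d.2) :=
      ⟨_, div_mul_cancel₀ _ (ne_of_gt hden)⟩
    have hσ0 : 0 ≤ σ := by nlinarith
    have hσ1 : σ ≤ 1 := by nlinarith
    set X : ℝ × ℝ := (1 - σ) • toR2 d + σ • toR2 ((M, M) : ℕ × ℕ) with hXdef
    have hXval : a * X.1 + b * X.2 = 1 := by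
      rw [hXdef]
      simp only [Prod.fst_add, Prod.snd_add, Prod.smul_fst, Prod.smul_snd, smul_eq_mul]
      show a * ((1 - σ) * (d.1:ℝ) + σ * ((M:ℕ):ℝ)) + b * ((1 - σ) * (d.2:ℝ) + σ * ((M:ℕ):ℝ)) = 1
      linear_combination hσmul
    have hXhull : X ∈ convexHull ℝ (toR2 '' (posQuad \ S)) := by
      rw [hXdef]
      exact (convex_convexHull ℝ _) hdhull hwhull (by linarith) hσ0 (by ring)
    have hXspan : X ∈ (affineSpan ℝ {toR2 c1, toR2 c2} : Set (ℝ × ℝ)) := by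
      obtain ⟨τ, hτ⟩ := line_param (ne_of_gt hb) (show (toR2 c1).1 ≠ (toR2 c2).1 from hx12)
        hl1 hl2 hXval
      have : X = AffineMap.lineMap (toR2 c1) (toR2 c2) τ := by
        rw [AffineMap.lineMap_apply_module]
        exact hτ
      rw [this]
      exact AffineMap.lineMap_mem_affineSpan_pair _ _ _
    rw [Set.eq_empty_iff_forall_notMem] at hline
    exact hline X ⟨hXspan, hXhull⟩
  -- conclude using the two orientations of removable_of_claims
  have hD2 : (c2.1 : ℝ) * c1.2 - (c1.1 : ℝ) * c2.2 ≠ 0 := fun h => hD (by linarith)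
  have H2' : ∀ z ∈ S, a * z.1 + b * z.2 = 1 →
      ∃ θ : ℝ, 0 ≤ θ ∧ θ ≤ 1 ∧ (z.1 : ℝ) = θ * c2.1 + (1 - θ) * c1.1 ∧
        (z.2 : ℝ) = θ * c2.2 + (1 - θ) * c1.2 := by
    intro z hz h1
    obtain ⟨θ, h0, hθ1, hxe, hye⟩ := H2 z hz h1
    exact ⟨1 - θ, by linarith, by linarith, by rw [hxe]; ring, by rw [hye]; ring⟩
  exact ⟨removable_of_claims hfin h1S h2S hcoord hx12 hD ha hb hl1 hl2 H1 H2 H3,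
    removable_of_claims hfin h2S h1S hcoord (Ne.symm hx12) hD2 ha hb hl2 hl1 H1 H2' H3⟩

lemma forward_dir {S : Set (ℕ × ℕ)} {α β : ℝ} (hα : 0 < α) (hβ : 0 < β)
    (hSeq : S = Cut α β) {c1 c2 : ℕ × ℕ} (h1S : c1 ∈ S) (h2S : c2 ∈ S)
    (hx : c2.1 < c1.1) (hr1 : RemovableCell S c1) (hr2 : RemovableCell S c2) :
    ConsecutiveVertices (convexHull ℝ (toR2 '' S)) (toR2 c1) (toR2 c2) ∧
      (affineSpan ℝ {toR2 c1, toR2 c2} : Set (ℝ × ℝ)) ∩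
        convexHull ℝ (toR2 '' (posQuad \ S)) = ∅ := by
  have hcoord : ∀ z ∈ S, 1 ≤ z.1 ∧ 1 ≤ z.2 := by
    intro z hz; rw [hSeq] at hz; exact ⟨hz.1, hz.2.1⟩
  have h11 := hcoord c1 h1S
  have h22 := hcoord c2 h2S
  obtain ⟨u1, v1, hu1, hv1, hc1, hf1, hg1⟩ := removable_facts h11.1 h11.2 hr1
  obtain ⟨u2, v2, hu2, hv2, hc2, hf2, hg2⟩ := removable_facts h22.1 h22.2 hr2
  have hne12 : c1 ≠ c2 := fun h => absurd (congrArg Prod.fst h) (by omega)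
  have hX : (c2.1 : ℝ) < c1.1 := by exact_mod_cast hx
  have hy : c1.2 < c2.2 := by
    by_contra hle
    push_neg at hle
    have hY : (c2.2 : ℝ) ≤ c1.2 := by exact_mod_cast hle
    have hmono : u2 * (c2.1:ℝ) + v2 * c2.2 ≤ u2 * c1.1 + v2 * c1.2 := by
      have e1 : u2 * (c2.1:ℝ) ≤ u2 * c1.1 := mul_le_mul_of_nonneg_left hX.le hu2.le
      have e2 : v2 * (c2.2:ℝ) ≤ v2 * c1.2 := mul_le_mul_of_nonneg_left hY hv2.le
      linarith
    have := hf2 c1 h1S hne12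
    linarith
  obtain ⟨hD, a, b, ha, hb, hl1, hl2⟩ := line_coeffs
    (show (1:ℝ) ≤ c1.1 by exact_mod_cast h11.1) (show (1:ℝ) ≤ c1.2 by exact_mod_cast h11.2)
    (show (1:ℝ) ≤ c2.1 by exact_mod_cast h22.1) (show (1:ℝ) ≤ c2.2 by exact_mod_cast h22.2)
    (Or.inl ⟨by exact_mod_cast hx, by exact_mod_cast hy⟩)
  obtain ⟨cI, cII, cIII⟩ := claims_main hα hβ hSeq hx hy h1S h2S hu1 hv1 hc1 hf1 hg1
    hu2 hv2 hc2 hf2 hg2 ha hb hl1 hl2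
  exact rhs_of_claims h1S h2S hne12 ha hb hl1 hl2 hc1 hf1 hc2 hf2 cI cII cIII

theorem stmt3 (S : Set (ℕ × ℕ)) (hS : IsTriangularSet S) (c1 c2 : ℕ × ℕ)
    (h1 : c1 ∈ S) (h2 : c2 ∈ S) (hne : c1 ≠ c2) :
    (RemovableCell S c1 ∧ RemovableCell S c2) ↔
      (ConsecutiveVertices (convexHull ℝ (toR2 '' S)) (toR2 c1) (toR2 c2) ∧
        (affineSpan ℝ {toR2 c1, toR2 c2} : Set (ℝ × ℝ)) ∩
          convexHull ℝ (toR2 '' (posQuad \ S)) = ∅) := by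
  obtain ⟨α, β, hα, hβ, hSeq⟩ := tri_iff_cut.mp hS
  have hcoord : ∀ z ∈ S, 1 ≤ z.1 ∧ 1 ≤ z.2 := by
    intro z hz; rw [hSeq] at hz; exact ⟨hz.1, hz.2.1⟩
  have h11 := hcoord c1 h1
  have h22 := hcoord c2 h2
  constructor
  · rintro ⟨hr1, hr2⟩
    -- the two cells are incomparable, in particular their first coordinates differ
    obtain ⟨u1, v1, hu1, hv1, hc1, hf1, hg1⟩ := removable_facts h11.1 h11.2 hr1
    obtain ⟨u2, v2, hu2, hv2, hc2, hf2, hg2⟩ := removable_facts h22.1 h22.2 hr2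
    have hx12 : c1.1 ≠ c2.1 := by
      intro hxe
      -- then the cells are comparable; contradiction with both being cut off
      rcases le_or_gt c1.2 c2.2 with hyy | hyy
      · -- c1 ≤ c2
        have e0 : (c1.1 : ℝ) = c2.1 := by exact_mod_cast hxe
        have e1 : u1 * (c1.1:ℝ) ≤ u1 * c2.1 := by rw [e0]
        have e2 : v1 * (c1.2:ℝ) ≤ v1 * c2.2 :=
          mul_le_mul_of_nonneg_left (by exact_mod_cast hyy) hv1.le
        have := hf1 c2 h2 (fun h => hne h.symm)
        linarith
      · have e0 : (c2.1 : ℝ) = c1.1 := by exact_mod_cast hxe.symm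
        have e1 : u2 * (c2.1:ℝ) ≤ u2 * c1.1 := by rw [e0]
        have e2 : v2 * (c2.2:ℝ) ≤ v2 * c1.2 :=
          mul_le_mul_of_nonneg_left (by exact_mod_cast hyy.le) hv2.le
        have := hf2 c1 h1 hne
        linarith
    rcases Nat.lt_or_ge c2.1 c1.1 with hxlt | hxge
    · exact forward_dir hα hβ hSeq h1 h2 hxlt hr1 hr2
    · have hxlt : c1.1 < c2.1 := by omega
      obtain ⟨hCV, hline⟩ := forward_dir hα hβ hSeq h2 h1 hxlt hr2 hr1
      refine ⟨⟨hCV.1.symm, hCV.2.2.1, hCV.2.1, ?_⟩, ?_⟩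
      · rw [segment_symm]
        exact hCV.2.2.2
      · rw [Set.pair_comm]
        exact hline
  · rintro ⟨hCV, hline⟩
    exact reverse_dir hα hβ hSeq h1 h2 hne hCV hline
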